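/- For the Margolus-diffusion Markov chain with parameter p ∈ (0,1), p ≠ 1/2, and symmetric initial condition, the marginal distribution at odd times and even positions is P_{2n+1}(2j) = (1−p) p^{2j} (1−2p)^{n−j} · J_{n−j}^{(2j,0)}(2p²/(1−2p) + 1) for 0 ≤ j ≤ n, where J_m^{(α,β)}(x) denotes the Jacobi polynomial of degree m with parameters (α, β). -/

import Mathlib

/-- Generalized binomial coefficient `C(a, m)` for real `a`. -/
noncomputable def genBinom (a : ℝ) (m : ℕ) : ℝ :=
  (∏ i ∈ Finset.range m, (a - i)) / (m.factorial : ℝ)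

/-- Jacobi polynomial `P_n^{(α,β)}(x)` via its finite-sum representation. -/
noncomputable def jacobiP (n : ℕ) (α β x : ℝ) : ℝ :=
  ∑ k ∈ Finset.range (n + 1),
    genBinom ((n : ℝ) + α) (n - k) * genBinom ((n : ℝ) + β) k *
      ((x - 1) / 2) ^ k * ((x + 1) / 2) ^ (n - k)

noncomputable def Te (p : ℝ) (t i : ℕ) (x : ℤ) : ℝ :=
  if 0 ≤ (t:ℤ) - 2*(i+1) + x ∧ 0 ≤ (t:ℤ) - 2*(i+1) - x ∧ (2:ℤ) ∣ ((t:ℤ) + x) then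
    p ^ (((t:ℤ) - 2*(i+1)).toNat) * (1-p) ^ (2*(i+1)) *
      (((((t:ℤ) - 2*(i+1) + x)/2).toNat + (i+1)).choose (i+1) : ℕ) *
      (((((t:ℤ) - 2*(i+1) - x)/2).toNat + i).choose i : ℕ)
  else 0

noncomputable def To (p : ℝ) (t i : ℕ) (x : ℤ) : ℝ :=
  if 0 ≤ (t:ℤ) - (2*i+1) + x ∧ 0 ≤ (t:ℤ) - (2*i+1) - x ∧ ¬ (2:ℤ) ∣ ((t:ℤ) + x) then
    p ^ (((t:ℤ) - (2*i+1)).toNat) * (1-p) ^ (2*i+1) *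
      (((((t:ℤ) - (2*i+1) - x)/2).toNat + i).choose i : ℕ) *
      (((((t:ℤ) - (2*i+1) + x)/2).toNat + i).choose i : ℕ)
  else 0

noncomputable def F (p : ℝ) (t : ℕ) (x : ℤ) : ℝ :=
  ((if x = (t:ℤ) then p^t else 0) + (∑ i ∈ Finset.range t, Te p t i x)
    + (∑ i ∈ Finset.range t, To p t i x)) / 2

lemma Te_vanish (p : ℝ) (t i : ℕ) (x : ℤ) (h : (t:ℤ) < 2*(i+1)) : Te p t i x = 0 := by
  unfold Te
  rw [if_neg]
  rintro ⟨h1, h2, -⟩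
  omega

lemma To_vanish (p : ℝ) (t i : ℕ) (x : ℤ) (h : (t:ℤ) < 2*i+1) : To p t i x = 0 := by
  unfold To
  rw [if_neg]
  rintro ⟨h1, h2, -⟩
  omega

lemma F_eq (p : ℝ) (t : ℕ) (x : ℤ) (N : ℕ) (h : t ≤ N) :
    F p t x = ((if x = (t:ℤ) then p^t else 0) + (∑ i ∈ Finset.range N, Te p t i x)
      + (∑ i ∈ Finset.range N, To p t i x)) / 2 := by
  unfold F
  rw [Finset.sum_subset (Finset.range_subset_range.2 h), Finset.sum_subset (Finset.range_subset_range.2 h)]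
  · intro i _ hi
    simp only [Finset.mem_range, not_lt] at hi
    exact To_vanish p t i x (by omega)
  · intro i _ hi
    simp only [Finset.mem_range, not_lt] at hi
    exact Te_vanish p t i x (by omega)

lemma keyA (p : ℝ) (t i : ℕ) (x : ℤ) :
    Te p (t+1) i x = p * Te p t i (x-1) + (1-p) * To p t i (-x) := by
  unfold Te To
  push_cast
  split_ifs with h1 h2 h3
  · obtain ⟨u, hu⟩ : ∃ u:ℕ, (t:ℤ)+1-2*((i:ℤ)+1)+x = 2*(u:ℤ)+2 :=
      ⟨(((t:ℤ)+1-2*((i:ℤ)+1)+x)/2 - 1).toNat, by omega⟩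
    obtain ⟨v, hv⟩ : ∃ v:ℕ, (t:ℤ)+1-2*((i:ℤ)+1)-x = 2*(v:ℤ) :=
      ⟨(((t:ℤ)+1-2*((i:ℤ)+1)-x)/2).toNat, by omega⟩
    have e1 : (((t:ℤ)+1-2*((i:ℤ)+1)+x)/2).toNat = u+1 := by omega
    have e2 : (((t:ℤ)-2*((i:ℤ)+1)+(x-1))/2).toNat = u := by omega
    have e3 : (((t:ℤ)-(2*(i:ℤ)+1)- -x)/2).toNat = u+1 := by omega
    have e4 : (((t:ℤ)+1-2*((i:ℤ)+1)-x)/2).toNat = v := by omega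
    have e5 : (((t:ℤ)-2*((i:ℤ)+1)-(x-1))/2).toNat = v := by omega
    have e6 : (((t:ℤ)-(2*(i:ℤ)+1)+ -x)/2).toNat = v := by omega
    have e7 : ((t:ℤ)+1-2*((i:ℤ)+1)).toNat = ((t:ℤ)-2*((i:ℤ)+1)).toNat + 1 := by omega
    have e8 : ((t:ℤ)-(2*(i:ℤ)+1)).toNat = ((t:ℤ)-2*((i:ℤ)+1)).toNat + 1 := by omega
    rw [e1, e2, e3, e4, e5, e6, e7, e8]
    have ep : u+1+(i+1) = (u+(i+1))+1 := by omega
    rw [ep, Nat.choose_succ_succ (u+(i+1)) i]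
    have ep2 : u+1+i = u+(i+1) := by omega
    rw [ep2]
    push_cast
    ring
  · exfalso; omega
  · obtain ⟨v, hv⟩ : ∃ v:ℕ, (t:ℤ)+1-2*((i:ℤ)+1)-x = 2*(v:ℤ) :=
      ⟨(((t:ℤ)+1-2*((i:ℤ)+1)-x)/2).toNat, by omega⟩
    have hux : (t:ℤ)+1-2*((i:ℤ)+1)+x = 0 := by omega
    have e1 : (((t:ℤ)+1-2*((i:ℤ)+1)+x)/2).toNat = 0 := by omega
    have e3 : (((t:ℤ)-(2*(i:ℤ)+1)- -x)/2).toNat = 0 := by omega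
    have e4 : (((t:ℤ)+1-2*((i:ℤ)+1)-x)/2).toNat = v := by omega
    have e6 : (((t:ℤ)-(2*(i:ℤ)+1)+ -x)/2).toNat = v := by omega
    have e8 : ((t:ℤ)-(2*(i:ℤ)+1)).toNat = ((t:ℤ)+1-2*((i:ℤ)+1)).toNat := by omega
    rw [e1, e3, e4, e6, e8]
    simp only [Nat.zero_add, Nat.choose_self]
    push_cast
    ring
  · exfalso; omega
  · exfalso; omega
  · exfalso; omega
  · exfalso; omega
  · ring

lemma keyB (p : ℝ) (t i : ℕ) (x : ℤ) :
    To p (t+1) (i+1) x = p * To p t (i+1) (x-1) + (1-p) * Te p t i (-x) := by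
  unfold Te To
  push_cast
  split_ifs with h1 h2 h3
  · have hpar : (2:ℤ) ∣ ((t:ℤ) + x) := by omega
    obtain ⟨u, hu⟩ : ∃ u:ℕ, (t:ℤ)+1-(2*((i:ℤ)+1)+1)-x = 2*(u:ℤ) :=
      ⟨(((t:ℤ)+1-(2*((i:ℤ)+1)+1)-x)/2).toNat, by omega⟩
    obtain ⟨v, hv⟩ : ∃ v:ℕ, (t:ℤ)+1-(2*((i:ℤ)+1)+1)+x = 2*(v:ℤ)+2 :=
      ⟨(((t:ℤ)+1-(2*((i:ℤ)+1)+1)+x)/2 - 1).toNat, by omega⟩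
    have e1 : (((t:ℤ)+1-(2*((i:ℤ)+1)+1)-x)/2).toNat = u := by omega
    have e2 : (((t:ℤ)-(2*((i:ℤ)+1)+1)-(x-1))/2).toNat = u := by omega
    have e3 : (((t:ℤ)-2*((i:ℤ)+1)+ -x)/2).toNat = u := by omega
    have e4 : (((t:ℤ)+1-(2*((i:ℤ)+1)+1)+x)/2).toNat = v+1 := by omega
    have e5 : (((t:ℤ)-(2*((i:ℤ)+1)+1)+(x-1))/2).toNat = v := by omega
    have e6 : (((t:ℤ)-2*((i:ℤ)+1)- -x)/2).toNat = v+1 := by omega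
    have e7 : ((t:ℤ)+1-(2*((i:ℤ)+1)+1)).toNat = ((t:ℤ)-(2*((i:ℤ)+1)+1)).toNat + 1 := by omega
    have e8 : ((t:ℤ)-2*((i:ℤ)+1)).toNat = ((t:ℤ)-(2*((i:ℤ)+1)+1)).toNat + 1 := by omega
    rw [e1, e2, e3, e4, e5, e6, e7, e8]
    have ep : v+1+(i+1) = (v+(i+1))+1 := by omega
    rw [ep, Nat.choose_succ_succ (v+(i+1)) i]
    have ep2 : v+1+i = v+(i+1) := by omega
    rw [ep2]
    push_cast
    ring
  · exfalso; omega
  · have hpar : (2:ℤ) ∣ ((t:ℤ) + x) := by omega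
    obtain ⟨u, hu⟩ : ∃ u:ℕ, (t:ℤ)+1-(2*((i:ℤ)+1)+1)-x = 2*(u:ℤ) :=
      ⟨(((t:ℤ)+1-(2*((i:ℤ)+1)+1)-x)/2).toNat, by omega⟩
    have e1 : (((t:ℤ)+1-(2*((i:ℤ)+1)+1)-x)/2).toNat = u := by omega
    have e3 : (((t:ℤ)-2*((i:ℤ)+1)+ -x)/2).toNat = u := by omega
    have e4 : (((t:ℤ)+1-(2*((i:ℤ)+1)+1)+x)/2).toNat = 0 := by omega
    have e6 : (((t:ℤ)-2*((i:ℤ)+1)- -x)/2).toNat = 0 := by omega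
    have e8 : ((t:ℤ)-2*((i:ℤ)+1)).toNat = ((t:ℤ)+1-(2*((i:ℤ)+1)+1)).toNat := by omega
    rw [e1, e3, e4, e6, e8]
    simp only [Nat.zero_add, Nat.choose_self]
    push_cast
    ring
  · exfalso; omega
  · exfalso; omega
  · exfalso; omega
  · exfalso; omega
  · ring

lemma keyC (p : ℝ) (t : ℕ) (x : ℤ) :
    To p (t+1) 0 x = p * To p t 0 (x-1) + (1-p) * (if -x = (t:ℤ) then p^t else 0) := by
  unfold To
  push_cast
  simp only [Nat.choose_zero_right, Nat.cast_one, mul_one]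
  split_ifs with h1 h2 h3
  · exfalso; omega
  · have e : ((t:ℤ)+1-1).toNat = ((t:ℤ)-1).toNat + 1 := by omega
    rw [e]
    ring
  · have e : ((t:ℤ)+1-1).toNat = t := by omega
    rw [e]
    ring
  · exfalso; omega
  · exfalso; omega
  · exfalso; omega
  · exfalso; omega
  · ring

lemma F_rec (p : ℝ) (t : ℕ) (x : ℤ) :
    F p (t+1) x = p * F p t (x-1) + (1-p) * F p t (-x) := by
  rw [F_eq p (t+1) x (t+1) le_rfl, F_eq p t (x-1) (t+1) (Nat.le_succ t),
    F_eq p t (-x) (t+1) (Nat.le_succ t)]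
  have hδ : (if x = ((t+1:ℕ):ℤ) then p^(t+1) else 0)
      = p * (if x - 1 = (t:ℤ) then p^t else 0) := by
    push_cast
    split_ifs with ha hb hb
    · ring
    · exfalso; omega
    · exfalso; omega
    · ring
  have hE : ∑ i ∈ Finset.range (t+1), Te p (t+1) i x
      = ∑ i ∈ Finset.range (t+1), (p * Te p t i (x-1) + (1-p) * To p t i (-x)) :=
    Finset.sum_congr rfl (fun i _ => keyA p t i x)
  have hO : ∑ i ∈ Finset.range (t+1), To p (t+1) i x
      = (p * To p t 0 (x-1) + (1-p) * (if -x = (t:ℤ) then p^t else 0))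
        + ∑ i ∈ Finset.range t, (p * To p t (i+1) (x-1) + (1-p) * Te p t i (-x)) := by
    rw [Finset.sum_range_succ' (fun i => To p (t+1) i x) t]
    rw [Finset.sum_congr rfl (fun i (_ : i ∈ Finset.range t) => keyB p t i x)]
    rw [keyC p t x]
    ring
  rw [hδ, hE, hO]
  have hO2 : ∑ i ∈ Finset.range (t+1), To p t i (x-1)
      = To p t 0 (x-1) + ∑ i ∈ Finset.range t, To p t (i+1) (x-1) := by
    rw [Finset.sum_range_succ' (fun i => To p t i (x-1)) t]
    ring
  have hE2 : ∑ i ∈ Finset.range (t+1), Te p t i (-x)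
      = ∑ i ∈ Finset.range t, Te p t i (-x) := by
    rw [Finset.sum_range_succ, Te_vanish p t t (-x) (by push_cast; omega)]
    ring
  rw [hO2, hE2, Finset.sum_add_distrib, Finset.sum_add_distrib, ← Finset.mul_sum,
    ← Finset.mul_sum, ← Finset.mul_sum, ← Finset.mul_sum]
  ring

lemma P_eq (p : ℝ) (P : ℕ → ℤ → ℤ → ℝ)
    (hinit : ∀ x : ℤ,
      P 0 x 1 = (if x = 0 then (1 : ℝ) / 2 else 0) ∧
      P 0 x (-1) = (if x = 0 then (1 : ℝ) / 2 else 0))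
    (hrec : ∀ (t : ℕ) (x d : ℤ), d = 1 ∨ d = -1 →
      P (t + 1) x d = p * P t (x - d) d + (1 - p) * P t x (-d)) :
    ∀ t x, P t x 1 = F p t x ∧ P t x (-1) = F p t (-x) := by
  intro t
  induction t with
  | zero =>
    intro x
    have hF : ∀ y : ℤ, F p 0 y = (if y = 0 then (1:ℝ)/2 else 0) := by
      intro y
      unfold F
      simp only [Finset.range_zero, Finset.sum_empty, Nat.cast_zero, pow_zero, add_zero]
      split_ifs <;> norm_num
    refine ⟨((hinit x).1).trans ?_, ((hinit x).2).trans ?_⟩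
    · rw [hF x]
    · rw [hF (-x)]
      simp [neg_eq_zero]
  | succ t ih =>
    intro x
    constructor
    · rw [hrec t x 1 (Or.inl rfl), (ih (x-1)).1, (ih x).2, F_rec]
    · rw [hrec t x (-1) (Or.inr rfl)]
      have e1 : x - (-1) = x + 1 := by ring
      have e2 : -(-1 : ℤ) = 1 := by norm_num
      rw [e1, e2, (ih (x+1)).2, (ih x).1, F_rec p t (-x)]
      have e3 : -(x+1) = -x - 1 := by ring
      rw [e3, neg_neg]

lemma To_eval (p : ℝ) (n j i : ℕ) (hj : j ≤ n) (x : ℤ)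
    (hx : x = 2*(j:ℤ) ∨ x = -(2*(j:ℤ))) :
    To p (2*n+1) i x = if i + j ≤ n then
      p ^ (2*(n-i)) * (1-p)^(2*i+1) * ((n-j).choose i : ℕ) * ((n+j).choose i : ℕ)
    else 0 := by
  unfold To
  by_cases hin : i + j ≤ n
  · rw [if_pos hin, if_pos]
    · have e7 : (((2*n+1:ℕ):ℤ) - (2*i+1)).toNat = 2*(n-i) := by push_cast; omega
      rcases hx with rfl | rfl
      · have e1 : ((((2*n+1:ℕ):ℤ) - (2*i+1) - 2*(j:ℤ))/2).toNat + i = n - j := by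
          push_cast; omega
        have e2 : ((((2*n+1:ℕ):ℤ) - (2*i+1) + 2*(j:ℤ))/2).toNat + i = n + j := by
          push_cast; omega
        rw [e1, e2, e7]
      · have e1 : ((((2*n+1:ℕ):ℤ) - (2*i+1) - -(2*(j:ℤ)))/2).toNat + i = n + j := by
          push_cast; omega
        have e2 : ((((2*n+1:ℕ):ℤ) - (2*i+1) + -(2*(j:ℤ)))/2).toNat + i = n - j := by
          push_cast; omega
        rw [e1, e2, e7]
        ring
    · rcases hx with rfl | rfl <;>
        refine ⟨by push_cast; omega, by push_cast; omega, by push_cast; omega⟩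
  · rw [if_neg hin, if_neg]
    rintro ⟨ha, hb, -⟩
    rcases hx with rfl | rfl <;> (push_cast at ha hb; omega)

lemma Te_odd_zero (p : ℝ) (n j i : ℕ) (x : ℤ)
    (hx : x = 2*(j:ℤ) ∨ x = -(2*(j:ℤ))) :
    Te p (2*n+1) i x = 0 := by
  unfold Te
  rw [if_neg]
  rintro ⟨-, -, h⟩
  rcases hx with rfl | rfl <;> (push_cast at h; omega)

lemma F_odd (p : ℝ) (n j : ℕ) (hj : j ≤ n) :
    F p (2*n+1) (2*(j:ℤ)) + F p (2*n+1) (-(2*(j:ℤ)))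
      = ∑ i ∈ Finset.range (n-j+1),
          p ^ (2*(n-i)) * (1-p)^(2*i+1) * ((n-j).choose i : ℕ) * ((n+j).choose i : ℕ) := by
  unfold F
  have hδ1 : ¬(2*(j:ℤ) = ((2*n+1:ℕ):ℤ)) := by push_cast; omega
  have hδ2 : ¬(-(2*(j:ℤ)) = ((2*n+1:ℕ):ℤ)) := by push_cast; omega
  have hTe1 : ∑ i ∈ Finset.range (2*n+1), Te p (2*n+1) i (2*(j:ℤ)) = 0 :=
    Finset.sum_eq_zero (fun i _ => Te_odd_zero p n j i _ (Or.inl rfl))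
  have hTe2 : ∑ i ∈ Finset.range (2*n+1), Te p (2*n+1) i (-(2*(j:ℤ))) = 0 :=
    Finset.sum_eq_zero (fun i _ => Te_odd_zero p n j i _ (Or.inr rfl))
  have hTo : ∀ x : ℤ, (x = 2*(j:ℤ) ∨ x = -(2*(j:ℤ))) →
      ∑ i ∈ Finset.range (2*n+1), To p (2*n+1) i x
      = ∑ i ∈ Finset.range (n-j+1),
          p ^ (2*(n-i)) * (1-p)^(2*i+1) * ((n-j).choose i : ℕ) * ((n+j).choose i : ℕ) := by
    intro x hx
    rw [Finset.sum_congr rfl (fun i (_ : i ∈ Finset.range (2*n+1)) => To_eval p n j i hj x hx)]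
    rw [← Finset.sum_subset (Finset.range_subset_range.2 (by omega : n-j+1 ≤ 2*n+1))]
    · exact Finset.sum_congr rfl (fun i hi => if_pos (by
        simp only [Finset.mem_range] at hi; omega))
    · intro i _ hi
      simp only [Finset.mem_range, not_lt] at hi
      exact if_neg (by omega)
  rw [if_neg hδ1, if_neg hδ2, hTe1, hTe2, hTo _ (Or.inl rfl), hTo _ (Or.inr rfl)]
  ring

lemma genBinom_natCast (N k : ℕ) : genBinom (N:ℝ) k = (N.choose k : ℝ) := by
  unfold genBinom
  rcases lt_or_ge N k with h | h
  · rw [Nat.choose_eq_zero_of_lt h, Finset.prod_eq_zero (Finset.mem_range.2 h) (by simp)]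
    simp
  · have hprod : ∏ i ∈ Finset.range k, ((N:ℝ) - i) = (N.descFactorial k : ℝ) := by
      rw [Nat.descFactorial_eq_prod_range, Nat.cast_prod]
      refine Finset.prod_congr rfl (fun i hi => ?_)
      rw [Nat.cast_sub (le_trans (le_of_lt (Finset.mem_range.1 hi)) h)]
    rw [hprod, Nat.descFactorial_eq_factorial_mul_choose]
    push_cast
    rw [mul_comm, mul_div_assoc, div_self (by exact_mod_cast k.factorial_ne_zero), mul_one]

theorem margolus_chain_odd_time_even_position
    (p : ℝ) (hp0 : 0 < p) (hp1 : p < 1) (hphalf : p ≠ 1 / 2)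
    (P : ℕ → ℤ → ℤ → ℝ)
    (hinit : ∀ x : ℤ,
      P 0 x 1 = (if x = 0 then (1 : ℝ) / 2 else 0) ∧
      P 0 x (-1) = (if x = 0 then (1 : ℝ) / 2 else 0))
    (hrec : ∀ (t : ℕ) (x d : ℤ), d = 1 ∨ d = -1 →
      P (t + 1) x d = p * P t (x - d) d + (1 - p) * P t x (-d)) :
    ∀ n j : ℕ, j ≤ n →
      P (2 * n + 1) (2 * (j : ℤ)) 1 + P (2 * n + 1) (2 * (j : ℤ)) (-1)
        = (1 - p) * p ^ (2 * j) * (1 - 2 * p) ^ (n - j) *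
            jacobiP (n - j) (2 * j : ℝ) 0 (2 * p ^ 2 / (1 - 2 * p) + 1) := by
  intro n j hj
  have h2p : (1:ℝ) - 2*p ≠ 0 := by
    intro h; apply hphalf; linarith
  rw [(P_eq p P hinit hrec (2*n+1) (2*(j:ℤ))).1, (P_eq p P hinit hrec (2*n+1) (2*(j:ℤ))).2,
    F_odd p n j hj]
  set m := n - j with hm
  -- rewrite the Jacobi polynomial
  unfold jacobiP
  have hα : ((m:ℝ) + (2*(j:ℕ):ℝ)) = (((m + 2*j : ℕ)):ℝ) := by push_cast; ring
  have hxA : ((2 * p ^ 2 / (1 - 2 * p) + 1 - 1) / 2) = p^2/(1-2*p) := by ring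
  have hxB : ((2 * p ^ 2 / (1 - 2 * p) + 1 + 1) / 2) = (1-p)^2/(1-2*p) := by
    field_simp; ring
  have hterm : ∀ k ∈ Finset.range (m+1),
      genBinom ((m : ℝ) + (2 * j : ℝ)) (m - k) * genBinom ((m : ℝ) + 0) k *
        ((2 * p ^ 2 / (1 - 2 * p) + 1 - 1) / 2) ^ k *
        ((2 * p ^ 2 / (1 - 2 * p) + 1 + 1) / 2) ^ (m - k)
      = ((m + 2*j).choose (m-k) : ℝ) * (m.choose k : ℝ) *
          (p^2/(1-2*p)) ^ k * ((1-p)^2/(1-2*p)) ^ (m-k) := by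
    intro k _
    rw [hxA, hxB, add_zero]
    have : ((m:ℝ) + (2 * j : ℝ)) = (((m + 2*j : ℕ)):ℝ) := by push_cast; ring
    rw [this, genBinom_natCast, genBinom_natCast]
  rw [Finset.sum_congr rfl hterm, Finset.mul_sum]
  -- reflect the left-hand sum
  rw [← Finset.sum_range_reflect
    (fun i => p ^ (2*(n-i)) * (1-p)^(2*i+1) * ((n-j).choose i : ℕ) * ((n+j).choose i : ℕ))
    (m+1)]
  refine Finset.sum_congr rfl (fun k hk => ?_)
  simp only [Finset.mem_range] at hk
  have hkm : k ≤ m := by omega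
  simp only [Nat.add_sub_cancel]
  have e1 : n - (m - k) = j + k := by omega
  have e2 : (n-j).choose (m-k) = m.choose k := by
    rw [← hm, Nat.choose_symm hkm]
  have e3 : (n+j).choose (m-k) = (m + 2*j).choose (m-k) := by
    congr 1; omega
  rw [e1, e2, e3]
  have hsplit : (1-2*p)^m = (1-2*p)^k * (1-2*p)^(m-k) := by
    rw [← pow_add]; congr 1; omega
  have hq : (1-p)^(2*(m-k)+1) = ((1-p)^2)^(m-k) * (1-p) := by
    rw [pow_succ, pow_mul]
  rw [hq, hsplit, div_pow, div_pow]
  field_simp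
  have hw' : (1:ℝ) - p*2 ≠ 0 := by contrapose! h2p; linarith
  have hw : ((1:ℝ) - p*2)⁻¹ ^ k * (1 - p*2)⁻¹ ^ (m-k) * (1-p*2)^k * (1-p*2)^(m-k) = 1 := by
    rw [inv_pow, inv_pow]; field_simp
  linear_combination (p - 1) * (p ^ (j * 2) * p ^ (k * 2) * ((m.choose k : ℕ) : ℝ) * (((m + 2 * j).choose (m - k) : ℕ) : ℝ) * (1 - p * 2 + p ^ 2) ^ (m - k)) * hw
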